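/- Let n, m ≥ 1 be integers, 1 ≤ l ≤ m and 0 < α < mn. There exists a constant C, depending only on m, n and α, with the following property. Let r > 0, M ≥ 8m, x_0, y_1, …, y_m ∈ ℝ^n (with y_l unused). Let f_l ∈ L^1(ℝ^n) be supported in B(x_0, r) with ∫_{ℝ^n} f_l dx = 0, and for j ≠ l let f_j be nonnegative measurable and supported in B(y_j, r). Then for every x ∈ ℝ^n with |x − x_0| ≥ M r: |I_α(f_1, …, f_m)(x)| ≤ C r (M r)^{α − mn − 1} ‖f_l‖_{L^1(ℝ^n)} ∏_{j ≠ l} ∫_{ℝ^n} f_j(y) dy. -/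

import Mathlib

open MeasureTheory ENNReal Filter Metric

noncomputable section

/-- Euclidean space `ℝⁿ`. -/
abbrev En (n : ℕ) : Type := EuclideanSpace ℝ (Fin n)

/-- The multilinear fractional integral operator `I_α`. -/
def mfi (n m : ℕ) (α : ℝ) (f : Fin m → En n → ℝ) (x : En n) : ℝ :=
  ∫ y : Fin m → En n, (∏ j, f j (y j)) / (∑ j, dist x (y j)) ^ ((m * n : ℝ) - α)

/-- The `l`-th partial adjoint `(I_α^*)_l`. -/
def mfiAdj (n m : ℕ) (α : ℝ) (l : Fin m) (f : Fin m → En n → ℝ) (x : En n) : ℝ :=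
  ∫ y : Fin m → En n, (∏ j, f j (y j)) /
    (dist (y l) x + ∑ j ∈ Finset.univ.erase l, dist (y l) (y j)) ^ ((m * n : ℝ) - α)

/-- The multilinear "multiplication" operator `Π_l`. -/
def PiOp (n m : ℕ) (α : ℝ) (l : Fin m) (g : En n → ℝ) (h : Fin m → En n → ℝ)
    (x : En n) : ℝ :=
  h l x * mfiAdj n m α l (Function.update h l g) x - g x * mfi n m α h x

/-- The `l`-th commutator `[b, I_α]_l`. -/
def commOp (n m : ℕ) (α : ℝ) (l : Fin m) (b : En n → ℝ) (f : Fin m → En n → ℝ)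
    (x : En n) : ℝ :=
  mfi n m α (Function.update f l (fun y => b y * f l y)) x - b x * mfi n m α f x

/-- The weighted Lebesgue norm `‖f‖_{L^p(w)}`. -/
def wNorm (n : ℕ) (p : ℝ) (w f : En n → ℝ) : ℝ≥0∞ :=
  (∫⁻ x, ENNReal.ofReal (|f x| ^ p * w x)) ^ (1 / p)

/-- The (axis-parallel, closed) cube with corner `c` and side `r`. -/
def cube (n : ℕ) (c : En n) (r : ℝ) : Set (En n) := {y | ∀ i, c i ≤ y i ∧ y i ≤ c i + r}

/-- The weight `μ_{ω⃗} = ∏ ω_i^q`. -/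
def muw (n m : ℕ) (q : ℝ) (ω : Fin m → En n → ℝ) (x : En n) : ℝ := ∏ i, ω i x ^ q

/-- The multilinear weight class `A_{P⃗,q}`. -/
def MemApq (n m : ℕ) (p : Fin m → ℝ) (q : ℝ) (ω : Fin m → En n → ℝ) : Prop :=
  (∀ i x, 0 ≤ ω i x) ∧ (∀ i, LocallyIntegrable (ω i) volume) ∧
  ∃ A : ℝ≥0∞, A ≠ ⊤ ∧ ∀ (c : En n) (r : ℝ), 0 < r →
    ((volume (cube n c r))⁻¹ * ∫⁻ x in cube n c r, ENNReal.ofReal (muw n m q ω x)) *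
      ∏ i, (((volume (cube n c r))⁻¹ *
          ∫⁻ x in cube n c r, ENNReal.ofReal (ω i x ^ (-(p i / (p i - 1))))) ^
        (q / (p i / (p i - 1)))) ≤ A

/-- A `(1,t,0)`-atom (with `t = ⊤` allowed). -/
def Atom10 (n : ℕ) (t : ℝ≥0∞) (a : En n → ℝ) : Prop :=
  Measurable a ∧ ∃ (c : En n) (r : ℝ), 0 < r ∧ (∀ x, x ∉ ball c r → a x = 0) ∧
    eLpNorm a t volume ≤ (volume (ball c r)) ^ (1 / t.toReal - 1) ∧
    (∫ x, a x) = 0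

/-- The atomic `H^1` norm of `f`. -/
def H1norm (n : ℕ) (f : En n → ℝ) : ℝ≥0∞ :=
  ⨅ (lam : ℕ → ℝ) (a : ℕ → En n → ℝ)
    (_ : (∀ k, Atom10 n ⊤ (a k)) ∧
      Tendsto (fun K => eLpNorm (fun x => f x - ∑ k ∈ Finset.range K, lam k * a k x) 1 volume)
        atTop (nhds 0)),
    ∑' k, ENNReal.ofReal |lam k|

/-- The `BMO` norm of `b`. -/
def BMOnorm (n : ℕ) (b : En n → ℝ) : ℝ≥0∞ :=
  ⨆ (c : En n) (r : ℝ) (_ : 0 < r),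
    (volume (cube n c r))⁻¹ *
      ∫⁻ x in cube n c r, ENNReal.ofReal |b x - ⨍ y in cube n c r, b y|

/-- MVT-type bound for `rpow`. -/
lemma my_rpow_sub_rpow_le {γ a b : ℝ} (hγ : 0 < γ) (ha : 0 < a) (hab : a ≤ b) :
    b ^ γ - a ^ γ ≤ γ * (b - a) * (a ^ (γ - 1) + b ^ (γ - 1)) := by
  rcases eq_or_lt_of_le hab with rfl | hab'
  · simp
  · have hb : 0 < b := ha.trans hab'
    have hcont : ContinuousOn (fun t : ℝ => t ^ γ) (Set.Icc a b) := fun t _ =>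
      (Real.continuousAt_rpow_const t γ (Or.inr hγ.le)).continuousWithinAt
    have hderiv : ∀ t ∈ Set.Ioo a b, HasDerivAt (fun t : ℝ => t ^ γ) (γ * t ^ (γ - 1)) t :=
      fun t ht => Real.hasDerivAt_rpow_const (Or.inl (ha.trans ht.1).ne')
    obtain ⟨c, hc, hceq⟩ :=
      exists_hasDerivAt_eq_slope (fun t : ℝ => t ^ γ) _ hab' hcont hderiv
    have hc0 : 0 < c := ha.trans hc.1
    have hbound : c ^ (γ - 1) ≤ a ^ (γ - 1) + b ^ (γ - 1) := by
      rcases le_total γ 1 with h1 | h1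
      · have h2 : c ^ (γ - 1) ≤ a ^ (γ - 1) :=
          Real.rpow_le_rpow_of_nonpos ha hc.1.le (by linarith)
        have h3 : (0:ℝ) ≤ b ^ (γ - 1) := Real.rpow_nonneg hb.le _
        linarith
      · have h2 : c ^ (γ - 1) ≤ b ^ (γ - 1) :=
          Real.rpow_le_rpow hc0.le hc.2.le (by linarith)
        have h3 : (0:ℝ) ≤ a ^ (γ - 1) := Real.rpow_nonneg ha.le _
        linarith
    have hba : 0 < b - a := sub_pos.2 hab'
    have heq : b ^ γ - a ^ γ = γ * c ^ (γ - 1) * (b - a) := by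
      field_simp at hceq
      linarith
    rw [heq]
    have h4 : (0:ℝ) ≤ γ * (b - a) := by positivity
    calc γ * c ^ (γ - 1) * (b - a) = γ * (b - a) * c ^ (γ - 1) := by ring
      _ ≤ γ * (b - a) * (a ^ (γ - 1) + b ^ (γ - 1)) :=
        mul_le_mul_of_nonneg_left hbound h4

/-- Kernel-difference bound. -/
lemma my_inv_rpow_sub_bound {γ a r S S0 : ℝ} (hγ : 0 < γ) (ha : 0 < a)
    (hS : a ≤ S) (hS0 : a ≤ S0) (hd : |S - S0| ≤ r) :
    |(S ^ γ)⁻¹ - (S0 ^ γ)⁻¹| ≤ 2 * γ * r / a ^ (γ + 1) := by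
  have key : ∀ u v : ℝ, a ≤ u → a ≤ v → u ≤ v → v - u ≤ r →
      (u ^ γ)⁻¹ - (v ^ γ)⁻¹ ≤ 2 * γ * r / a ^ (γ + 1) := by
    intro u v hu hv huv hr
    have hu0 : 0 < u := ha.trans_le hu
    have hv0 : 0 < v := ha.trans_le hv
    have hur : 0 < u ^ γ := Real.rpow_pos_of_pos hu0 _
    have hvr : 0 < v ^ γ := Real.rpow_pos_of_pos hv0 _
    have har : 0 < a ^ (γ + 1) := Real.rpow_pos_of_pos ha _
    rw [inv_sub_inv hur.ne' hvr.ne']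
    have h2 : v ^ γ - u ^ γ ≤ γ * (v - u) * (u ^ (γ - 1) + v ^ (γ - 1)) :=
      my_rpow_sub_rpow_le hγ hu0 huv
    have hsum : u ^ (γ - 1) + v ^ (γ - 1) ≤ 2 * (u ^ γ * v ^ γ) / a ^ (γ + 1) := by
      have hA : a ^ (γ + 1) = a * a ^ γ := by
        rw [show γ + 1 = 1 + γ by ring, Real.rpow_add ha, Real.rpow_one]
      have hupow : u ^ (γ - 1) * u = u ^ γ := by
        nth_rewrite 2 [← Real.rpow_one u]
        rw [← Real.rpow_add hu0]; ring_nf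
      have hvpow : v ^ (γ - 1) * v = v ^ γ := by
        nth_rewrite 2 [← Real.rpow_one v]
        rw [← Real.rpow_add hv0]; ring_nf
      have e1 : u ^ (γ - 1) * a ^ (γ + 1) ≤ u ^ γ * v ^ γ := by
        rw [hA, ← hupow]
        calc u ^ (γ - 1) * (a * a ^ γ) ≤ u ^ (γ - 1) * (u * v ^ γ) := by
              apply mul_le_mul_of_nonneg_left _ (Real.rpow_nonneg hu0.le _)
              exact mul_le_mul hu (Real.rpow_le_rpow ha.le hv hγ.le)
                (Real.rpow_nonneg ha.le _) hu0.le
          _ = u ^ (γ - 1) * u * v ^ γ := by ring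
      have f1 : v ^ (γ - 1) * a ^ (γ + 1) ≤ u ^ γ * v ^ γ := by
        rw [hA, ← hvpow]
        calc v ^ (γ - 1) * (a * a ^ γ) ≤ v ^ (γ - 1) * (v * u ^ γ) := by
              apply mul_le_mul_of_nonneg_left _ (Real.rpow_nonneg hv0.le _)
              exact mul_le_mul hv (Real.rpow_le_rpow ha.le hu hγ.le)
                (Real.rpow_nonneg ha.le _) hv0.le
          _ = u ^ γ * (v ^ (γ - 1) * v) := by ring
      rw [le_div_iff₀ har]
      ring_nf
      ring_nf at e1 f1
      linarith
    have hnum : v ^ γ - u ^ γ ≤ γ * r * (2 * (u ^ γ * v ^ γ) / a ^ (γ + 1)) := by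
      calc v ^ γ - u ^ γ ≤ γ * (v - u) * (u ^ (γ - 1) + v ^ (γ - 1)) := h2
        _ ≤ γ * r * (2 * (u ^ γ * v ^ γ) / a ^ (γ + 1)) := by
          have hr0 : 0 ≤ r := le_trans (by linarith) hr
          apply mul_le_mul
          · exact mul_le_mul_of_nonneg_left hr hγ.le
          · exact hsum
          · exact add_nonneg (Real.rpow_nonneg hu0.le _) (Real.rpow_nonneg hv0.le _)
          · exact mul_nonneg hγ.le hr0
    rw [div_le_div_iff₀ (by positivity) har]
    calc (v ^ γ - u ^ γ) * a ^ (γ + 1)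
        ≤ (γ * r * (2 * (u ^ γ * v ^ γ) / a ^ (γ + 1))) * a ^ (γ + 1) := by
          apply mul_le_mul_of_nonneg_right hnum har.le
      _ = 2 * γ * r * (u ^ γ * v ^ γ) := by field_simp
  rcases le_total S S0 with h | h
  · have hmono : (S0 ^ γ)⁻¹ ≤ (S ^ γ)⁻¹ := by
      apply inv_anti₀ (Real.rpow_pos_of_pos (ha.trans_le hS) _)
      exact Real.rpow_le_rpow (ha.trans_le hS).le h hγ.le
    rw [abs_of_nonneg (by linarith)]
    exact key S S0 hS hS0 h (by have h2 := abs_le.1 hd; linarith [h2.1])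
  · have hmono : (S ^ γ)⁻¹ ≤ (S0 ^ γ)⁻¹ := by
      apply inv_anti₀ (Real.rpow_pos_of_pos (ha.trans_le hS0) _)
      exact Real.rpow_le_rpow (ha.trans_le hS0).le h hγ.le
    rw [abs_of_nonpos (by linarith), neg_sub]
    exact key S0 S hS0 hS h ((abs_le.1 hd).2)

lemma my_sum_erase_succAbove {k : ℕ} (l : Fin (k + 1)) (F : Fin (k + 1) → ℝ) :
    ∑ j ∈ Finset.univ.erase l, F j = ∑ j', F (l.succAbove j') := by
  have h1 := Fin.sum_univ_succAbove F l
  have h2 : F l + ∑ j ∈ Finset.univ.erase l, F j = ∑ j, F j :=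
    Finset.add_sum_erase _ F (Finset.mem_univ l)
  linarith

lemma my_lintegral_pi_prod {n : ℕ} : ∀ {k : ℕ} (f : Fin k → En n → ℝ≥0∞),
    (∀ i, Measurable (f i)) →
    ∫⁻ z : Fin k → En n, ∏ i, f i (z i) = ∏ i, ∫⁻ w, f i w := by
  intro k
  induction k with
  | zero =>
    intro f _
    simp [MeasureTheory.volume_pi, MeasureTheory.lintegral_const]
  | succ k ih =>
    intro f hf
    rw [MeasureTheory.volume_pi, ← ((MeasureTheory.measurePreserving_piFinSuccAbove
      (fun _ : Fin (k + 1) => (volume : Measure (En n))) 0).symm).lintegral_comp_emb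
      (MeasurableEquiv.measurableEmbedding _)]
    simp_rw [MeasurableEquiv.piFinSuccAbove_symm_apply, Fin.insertNthEquiv,
      Fin.prod_univ_succ, Fin.insertNth_zero, Equiv.coe_fn_mk, Fin.cons_zero, Fin.cons_succ]
    simp only [Fin.zero_succAbove, cast_eq]
    have hmeas : Measurable fun z : Fin k → En n => ∏ i : Fin k, f i.succ (z i) :=
      Finset.measurable_prod Finset.univ fun j _ => (hf j.succ).comp (measurable_pi_apply j)
    rw [MeasureTheory.lintegral_prod_mul (hf 0).aemeasurable hmeas.aemeasurable,
      ← MeasureTheory.volume_pi, ih (fun i => f i.succ) (fun i => hf i.succ)]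

set_option maxHeartbeats 1000000 in
/-- Decay of `I_α(f₁, …, f_m)` far from the support of the mean-zero factor
`f_l`. -/
theorem mfi_decay_cancellation (n m : ℕ) (hn : 1 ≤ n) (hm : 1 ≤ m) (l : Fin m) (α : ℝ)
    (hα0 : 0 < α) (hα1 : α < m * n) :
    ∃ C : ℝ, 0 < C ∧ ∀ (r M : ℝ) (x0 : En n) (y : Fin m → En n),
      0 < r → 8 * m ≤ M →
      ∀ f : Fin m → En n → ℝ,
        Integrable (f l) volume → (∀ z, z ∉ ball x0 r → f l z = 0) →
        (∫ z, f l z) = 0 →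
        (∀ j, j ≠ l → Measurable (f j) ∧ (∀ x, 0 ≤ f j x) ∧
          ∀ z, z ∉ ball (y j) r → f j z = 0) →
        ∀ x : En n, M * r ≤ dist x x0 →
          |mfi n m α f x| ≤
            C * r * (M * r) ^ (α - m * n - 1) * (∫ z, |f l z|) *
              ∏ j ∈ Finset.univ.erase l, ∫ z, f j z := by
  obtain ⟨k, rfl⟩ : ∃ k, m = k + 1 := ⟨m - 1, by omega⟩
  set γ : ℝ := ((k + 1 : ℕ) : ℝ) * (n : ℝ) - α with hγdef
  have hγpos : 0 < γ := by
    have : α < ((k + 1 : ℕ) : ℝ) * (n : ℝ) := hα1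
    simp only [hγdef]; linarith
  refine ⟨2 * γ * 2 ^ (γ + 1), by positivity, ?_⟩
  intro r M x0 y hr hM f hfl hflsupp hflzero hf x hx
  have hk1 : (1 : ℝ) ≤ ((k + 1 : ℕ) : ℝ) := by exact_mod_cast Nat.one_le_iff_ne_zero.2 (by omega)
  have hm8 : (8 : ℝ) ≤ M := le_trans (by nlinarith) hM
  have hMr : 0 < M * r := mul_pos (by linarith) hr
  set S : (Fin (k + 1) → En n) → ℝ := fun z => ∑ j, dist x (z j) with hSdef
  set S0 : (Fin (k + 1) → En n) → ℝ :=
    fun z => dist x x0 + ∑ j ∈ Finset.univ.erase l, dist x (z j) with hS0def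
  set K : (Fin (k + 1) → En n) → ℝ := fun z => ((S z) ^ γ)⁻¹ with hKdef
  set K0 : (Fin (k + 1) → En n) → ℝ := fun z => ((S0 z) ^ γ)⁻¹ with hK0def
  set g : (Fin (k + 1) → En n) → ℝ := fun z => ∏ j, f j (z j) with hgdef
  have hmfi : mfi n (k + 1) α f x = ∫ z, g z * K z := by
    simp only [mfi, div_eq_mul_inv, hKdef, hSdef, hγdef, hgdef]
  have hS0low : ∀ z, M * r ≤ S0 z := by
    intro z
    have h1 : 0 ≤ ∑ j ∈ Finset.univ.erase l, dist x (z j) :=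
      Finset.sum_nonneg fun j _ => dist_nonneg
    have h2 : S0 z = dist x x0 + ∑ j ∈ Finset.univ.erase l, dist x (z j) := rfl
    linarith [hx]
  have hKbound : ∀ z, g z ≠ 0 →
      |K z - K0 z| ≤ 2 * γ * r / (M * r / 2) ^ (γ + 1) := by
    intro z hz
    have hzl : dist (z l) x0 < r := by
      by_contra h
      exact hz (Finset.prod_eq_zero (Finset.mem_univ l)
        (hflsupp _ (by simpa [mem_ball] using h)))
    have hSsplit : S z = dist x (z l) + ∑ j ∈ Finset.univ.erase l, dist x (z j) :=
      (Finset.add_sum_erase _ _ (Finset.mem_univ l)).symm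
    have hsum0 : 0 ≤ ∑ j ∈ Finset.univ.erase l, dist x (z j) :=
      Finset.sum_nonneg fun j _ => dist_nonneg
    have hxl : M * r - r ≤ dist x (z l) := by
      have h2 := dist_triangle x (z l) x0
      linarith [hx, hzl.le]
    have haS : M * r / 2 ≤ S z := by
      rw [hSsplit]
      nlinarith
    have haS0 : M * r / 2 ≤ S0 z := by linarith [hS0low z]
    have hdiff : |S z - S0 z| ≤ r := by
      have h5 : S0 z = dist x x0 + ∑ j ∈ Finset.univ.erase l, dist x (z j) := rfl
      have h4 : S z - S0 z = dist x (z l) - dist x x0 := by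
        rw [hSsplit, h5]; ring
      rw [h4, dist_comm x (z l), dist_comm x x0]
      exact (abs_dist_sub_le (z l) x0 x).trans hzl.le
    exact my_inv_rpow_sub_bound hγpos (by positivity) haS haS0 hdiff
  have hexp : α - ((k + 1 : ℕ) : ℝ) * (n : ℝ) - 1 = -(γ + 1) := by
    simp only [hγdef]; ring
  set B : ℝ := 2 * γ * 2 ^ (γ + 1) * r * (M * r) ^ (α - ((k + 1 : ℕ) : ℝ) * (n : ℝ) - 1)
    with hBdef
  have hBeq : 2 * γ * r / (M * r / 2) ^ (γ + 1) = B := by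
    rw [hBdef, hexp, Real.rpow_neg hMr.le,
      Real.div_rpow hMr.le (by norm_num : (0 : ℝ) ≤ 2)]
    have h1 : (0 : ℝ) < (M * r) ^ (γ + 1) := Real.rpow_pos_of_pos hMr _
    have h2 : (0 : ℝ) < (2 : ℝ) ^ (γ + 1) := Real.rpow_pos_of_pos two_pos _
    field_simp
  have hB0 : 0 < B := by
    rw [← hBeq]
    have h1 : (0 : ℝ) < (M * r / 2) ^ (γ + 1) := Real.rpow_pos_of_pos (by linarith) _
    positivity
  by_cases hint : ∀ j, Integrable (f j) volume
  · have hgint : Integrable g volume := Integrable.fintype_prod (f := f) hint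
    have hScont : Continuous S :=
      continuous_finset_sum _ fun j _ => continuous_const.dist (continuous_apply j)
    have hS0cont : Continuous S0 :=
      continuous_const.add
        (continuous_finset_sum _ fun j _ => continuous_const.dist (continuous_apply j))
    have hKm : Measurable K :=
      (hScont.rpow_const fun z => Or.inr hγpos.le).measurable.inv
    have hK0m : Measurable K0 :=
      (hS0cont.rpow_const fun z => Or.inr hγpos.le).measurable.inv
    have hK0le : ∀ z, |K0 z| ≤ ((M * r) ^ γ)⁻¹ := by
      intro z
      have h0 : 0 < S0 z := lt_of_lt_of_le hMr (hS0low z)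
      have h1 : 0 ≤ K0 z := inv_nonneg.2 (Real.rpow_nonneg h0.le _)
      rw [abs_of_nonneg h1]
      exact inv_anti₀ (Real.rpow_pos_of_pos hMr _)
        (Real.rpow_le_rpow hMr.le (hS0low z) hγpos.le)
    have hgK0 : Integrable (fun z => g z * K0 z) volume := by
      refine Integrable.mono' (hgint.norm.const_mul (((M * r) ^ γ)⁻¹))
        (hgint.aestronglyMeasurable.mul hK0m.aestronglyMeasurable)
        (ae_of_all _ fun z => ?_)
      rw [norm_mul, mul_comm]
      exact mul_le_mul_of_nonneg_right
        (by rw [Real.norm_eq_abs]; exact hK0le z) (norm_nonneg _)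
    have hkey : ∀ z, ‖g z * (K z - K0 z)‖ ≤ B * ‖g z‖ := by
      intro z
      by_cases hz : g z = 0
      · simp [hz]
      · rw [norm_mul, mul_comm]
        refine mul_le_mul_of_nonneg_right ?_ (norm_nonneg _)
        rw [Real.norm_eq_abs]
        exact (hKbound z hz).trans_eq hBeq
    have hgKK0 : Integrable (fun z => g z * (K z - K0 z)) volume :=
      Integrable.mono' (hgint.norm.const_mul B)
        (hgint.aestronglyMeasurable.mul (hKm.sub hK0m).aestronglyMeasurable)
        (ae_of_all _ hkey)
    have hzero : ∫ z, g z * K0 z = 0 := by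
      have hmp := (measurePreserving_piFinSuccAbove
        (fun _ : Fin (k + 1) => (volume : Measure (En n))) l).symm
      have h1 : ∫ z, g z * K0 z
          = ∫ z, g z * K0 z ∂(Measure.pi fun _ : Fin (k + 1) => volume) := by
        rw [← volume_pi]
      rw [h1, ← hmp.integral_comp']
      have hkey2 : ∀ (u : Fin (k + 1) → En n) (a : En n) (w : Fin k → En n),
          u l = a → (∀ j', u (l.succAbove j') = w j') →
          g u * K0 u = f l a * ((∏ j', f (l.succAbove j') (w j')) *
            ((dist x x0 + ∑ j', dist x (w j')) ^ γ)⁻¹) := by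
        intro u a w hul huw
        have hg1 : g u = f l a * ∏ j', f (l.succAbove j') (w j') := by
          have e1 : g u = ∏ j, f j (u j) := rfl
          rw [e1, Fin.prod_univ_succAbove (fun j => f j (u j)) l, hul]
          exact congrArg _ (Finset.prod_congr rfl fun j' _ => by rw [huw j'])
        have hK01 : K0 u = ((dist x x0 + ∑ j', dist x (w j')) ^ γ)⁻¹ := by
          have e2 : K0 u = ((dist x x0 + ∑ j ∈ Finset.univ.erase l, dist x (u j)) ^ γ)⁻¹ := rfl
          have e3 : ∑ j ∈ Finset.univ.erase l, dist x (u j) = ∑ j', dist x (w j') := by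
            rw [my_sum_erase_succAbove l (fun j => dist x (u j))]
            exact Finset.sum_congr rfl fun j' _ => by rw [huw j']
          rw [e2, e3]
        rw [hg1, hK01]; ring
      have h2 : ∀ p : En n × (Fin k → En n),
          g ((MeasurableEquiv.piFinSuccAbove (fun _ : Fin (k + 1) => En n) l).symm p) *
            K0 ((MeasurableEquiv.piFinSuccAbove (fun _ : Fin (k + 1) => En n) l).symm p)
          = f l p.1 * ((∏ j', f (l.succAbove j') (p.2 j')) *
              ((dist x x0 + ∑ j', dist x (p.2 j')) ^ γ)⁻¹) := by
        rintro ⟨a, w⟩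
        exact hkey2 _ a w (by simp [MeasurableEquiv.piFinSuccAbove_symm_apply])
          (fun j' => by simp [MeasurableEquiv.piFinSuccAbove_symm_apply])
      simp_rw [h2]
      rw [integral_prod_mul (f := f l) (g := fun w : Fin k → En n =>
        (∏ j', f (l.succAbove j') (w j')) *
          ((dist x x0 + ∑ j', dist x (w j')) ^ γ)⁻¹), hflzero, zero_mul]
    have hmfi2 : mfi n (k + 1) α f x = ∫ z, g z * (K z - K0 z) := by
      rw [hmfi]
      have h6 : (fun z => g z * K z) = fun z => g z * (K z - K0 z) + g z * K0 z := by
        funext z; ring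
      rw [h6, integral_add hgKK0 hgK0, hzero, add_zero]
    rw [hmfi2]
    have hgnorm : ∫ z, ‖g z‖ =
        (∫ z, |f l z|) * ∏ j ∈ Finset.univ.erase l, ∫ z, f j z := by
      have h1 : (fun z : Fin (k + 1) → En n => ‖g z‖) = fun z => ∏ j, |f j (z j)| := by
        funext z; simp only [Real.norm_eq_abs, hgdef, Finset.abs_prod]
      rw [h1, integral_fintype_prod_volume_eq_prod (f := fun j (w : En n) => |f j w|),
        ← Finset.mul_prod_erase Finset.univ _ (Finset.mem_univ l)]
      congr 1
      refine Finset.prod_congr rfl fun j hj => ?_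
      exact integral_congr_ae (ae_of_all _ fun w =>
        abs_of_nonneg ((hf j (Finset.ne_of_mem_erase hj)).2.1 w))
    calc |∫ z, g z * (K z - K0 z)| ≤ B * ∫ z, ‖g z‖ := by
          rw [← Real.norm_eq_abs]
          calc ‖∫ z, g z * (K z - K0 z)‖ ≤ ∫ z, B * ‖g z‖ :=
              norm_integral_le_of_norm_le (hgint.norm.const_mul B) (ae_of_all _ hkey)
            _ = B * ∫ z, ‖g z‖ := integral_const_mul B _
      _ = 2 * γ * 2 ^ (γ + 1) * r * (M * r) ^ (α - ((k + 1 : ℕ) : ℝ) * (n : ℝ) - 1) *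
          (∫ z, |f l z|) * ∏ j ∈ Finset.univ.erase l, ∫ z, f j z := by
          rw [hgnorm, hBdef]; ring
  · push_neg at hint
    obtain ⟨j0, hj0⟩ := hint
    have hj0l : j0 ≠ l := fun h => hj0 (h ▸ hfl)
    have hrhs : (∏ j ∈ Finset.univ.erase l, ∫ z, f j z) = 0 :=
      Finset.prod_eq_zero (Finset.mem_erase.2 ⟨hj0l, Finset.mem_univ _⟩) (integral_undef hj0)
    rw [hrhs, mul_zero, hmfi]
    by_cases hez : ∃ j, f j =ᵐ[volume] 0
    · obtain ⟨j1, hj1⟩ := hez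
      have hae : ∀ᵐ z : Fin (k + 1) → En n, f j1 (z j1) = 0 := by
        rw [volume_pi]
        exact (Measure.tendsto_eval_ae_ae
          (μ := fun _ : Fin (k + 1) => (volume : Measure (En n))) (i := j1)).eventually hj1
      have h0 : ∫ z, g z * K z = ∫ _z : Fin (k + 1) → En n, (0 : ℝ) := by
        refine integral_congr_ae ?_
        filter_upwards [hae] with z hz
        have hg0 : g z = 0 := Finset.prod_eq_zero (Finset.mem_univ j1) hz
        rw [hg0, zero_mul]
      rw [h0, integral_zero, abs_zero]
    · push_neg at hez
      have hnotint : ¬ Integrable (fun z => g z * K z) volume := by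
        intro hInt
        set R : ℝ := dist x x0 + r + ∑ j ∈ Finset.univ.erase l, (dist x (y j) + r)
          with hRdef
        have hsumR : 0 ≤ ∑ j ∈ Finset.univ.erase l, (dist x (y j) + r) :=
          Finset.sum_nonneg fun j _ => add_nonneg dist_nonneg hr.le
        have hR0 : 0 < R := by
          have h1 : (0:ℝ) ≤ dist x x0 := dist_nonneg
          have h2 : R = dist x x0 + r + ∑ j ∈ Finset.univ.erase l, (dist x (y j) + r) := rfl
          linarith
        obtain ⟨fl', hfl'meas, hfl'ae⟩ : ∃ fl', Measurable fl' ∧ f l =ᵐ[volume] fl' := by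
          have h := hfl.aestronglyMeasurable.aemeasurable
          exact ⟨h.mk (f l), h.measurable_mk, h.ae_eq_mk⟩
        set F : Fin (k + 1) → En n → ℝ≥0∞ :=
          fun j w => (‖Function.update f l fl' j w‖₊ : ℝ≥0∞) with hFdef
        have hFmeas : ∀ j, Measurable (F j) := by
          intro j
          rcases eq_or_ne j l with rfl | hj
          · simpa [hFdef, Function.update_self] using hfl'meas.nnnorm.coe_nnreal_ennreal
          · simpa [hFdef, Function.update_of_ne hj] using ((hf j hj).1).nnnorm.coe_nnreal_ennreal
        have haeup : ∀ᵐ z : Fin (k + 1) → En n, f l (z l) = fl' (z l) := by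
          rw [volume_pi]
          exact (Measure.tendsto_eval_ae_ae
            (μ := fun _ : Fin (k + 1) => (volume : Measure (En n))) (i := l)).eventually hfl'ae
        have hlow : ∀ᵐ z : Fin (k + 1) → En n,
            ENNReal.ofReal (R ^ γ)⁻¹ * ∏ j, F j (z j) ≤ (‖g z * K z‖₊ : ℝ≥0∞) := by
          filter_upwards [haeup] with z hz
          have hFg : ∏ j, F j (z j) = ENNReal.ofReal (∏ j, |f j (z j)|) := by
            rw [ENNReal.ofReal_prod_of_nonneg (fun j _ => abs_nonneg _)]
            refine Finset.prod_congr rfl fun j _ => ?_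
            rcases eq_or_ne j l with rfl | hj
            · simp [hFdef, Function.update_self, ← hz, ← enorm_eq_nnnorm, Real.enorm_eq_ofReal_abs]
            · simp [hFdef, Function.update_of_ne hj, ← enorm_eq_nnnorm, Real.enorm_eq_ofReal_abs]
          rw [hFg, ← ENNReal.ofReal_mul (p := (R ^ γ)⁻¹)
            (inv_nonneg.2 (Real.rpow_nonneg hR0.le _)), ← enorm_eq_nnnorm, Real.enorm_eq_ofReal_abs]
          apply ENNReal.ofReal_le_ofReal
          by_cases hgz : g z = 0
          · have habs : ∏ j, |f j (z j)| = 0 := by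
              rw [← Finset.abs_prod, show (∏ j, f j (z j)) = g z from rfl, hgz, abs_zero]
            rw [habs, mul_zero]
            exact abs_nonneg _
          · have hne : ∀ j, f j (z j) ≠ 0 := fun j hj0' =>
              hgz (Finset.prod_eq_zero (Finset.mem_univ j) hj0')
            have hzl : dist (z l) x0 < r := by
              by_contra h
              exact hne l (hflsupp _ (by simpa [mem_ball] using h))
            have hSsplit : S z = dist x (z l) + ∑ j ∈ Finset.univ.erase l, dist x (z j) :=
              (Finset.add_sum_erase _ _ (Finset.mem_univ l)).symm
            have hSub : S z ≤ R := by
              rw [hSsplit, hRdef]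
              have h1 : dist x (z l) ≤ dist x x0 + r := by
                have h2 := dist_triangle x x0 (z l)
                have h3 : dist x0 (z l) = dist (z l) x0 := dist_comm _ _
                linarith
              have h4 : ∑ j ∈ Finset.univ.erase l, dist x (z j)
                  ≤ ∑ j ∈ Finset.univ.erase l, (dist x (y j) + r) := by
                refine Finset.sum_le_sum fun j hj => ?_
                have hjl := Finset.ne_of_mem_erase hj
                have hzj : dist (z j) (y j) < r := by
                  by_contra h
                  exact hne j ((hf j hjl).2.2 _ (by simpa [mem_ball] using h))
                have h5 := dist_triangle x (y j) (z j)
                have h6 : dist (y j) (z j) = dist (z j) (y j) := dist_comm _ _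
                linarith
              linarith
            have hSpos : 0 < S z := by
              have h7 := dist_triangle x (z l) x0
              have h8 : 0 ≤ ∑ j ∈ Finset.univ.erase l, dist x (z j) :=
                Finset.sum_nonneg fun j _ => dist_nonneg
              rw [hSsplit]
              nlinarith [hx, hzl]
            have h3 : (R ^ γ)⁻¹ ≤ |K z| := by
              rw [show K z = ((S z) ^ γ)⁻¹ from rfl,
                abs_of_nonneg (inv_nonneg.2 (Real.rpow_nonneg hSpos.le _))]
              exact inv_anti₀ (Real.rpow_pos_of_pos hSpos _)
                (Real.rpow_le_rpow hSpos.le hSub hγpos.le)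
            have h4 : |g z| = ∏ j, |f j (z j)| := Finset.abs_prod _ _
            rw [abs_mul]
            calc (R ^ γ)⁻¹ * ∏ j, |f j (z j)| = |g z| * (R ^ γ)⁻¹ := by rw [h4]; ring
              _ ≤ |g z| * |K z| := mul_le_mul_of_nonneg_left h3 (abs_nonneg _)
        have hfin : ∫⁻ z, (‖g z * K z‖₊ : ℝ≥0∞) < ⊤ := hInt.2
        have hmono := lintegral_mono_ae hlow
        rw [lintegral_const_mul' (ENNReal.ofReal (R ^ γ)⁻¹)
          (fun z : Fin (k + 1) → En n => ∏ j, F j (z j))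
          ENNReal.ofReal_ne_top, my_lintegral_pi_prod F hFmeas] at hmono
        have hj0top : ∫⁻ w, F j0 w = ⊤ := by
          have h5 : F j0 = fun w => (‖f j0 w‖₊ : ℝ≥0∞) := by
            funext w; simp [hFdef, Function.update_of_ne hj0l]
          rw [h5]
          by_contra h
          exact hj0 ⟨((hf j0 hj0l).1).aestronglyMeasurable, lt_top_iff_ne_top.2 h⟩
        have hne0 : ∀ j, ∫⁻ w, F j w ≠ 0 := by
          intro j h0'
          have h6 := (lintegral_eq_zero_iff (hFmeas j)).1 h0'
          apply hez j
          rcases eq_or_ne j l with rfl | hj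
          · refine hfl'ae.trans ?_
            filter_upwards [h6] with w hw
            simpa [hFdef, Function.update_self] using hw
          · filter_upwards [h6] with w hw
            simpa [hFdef, Function.update_of_ne hj] using hw
        have htop : (∏ j, ∫⁻ w, F j w) = ⊤ := by
          rw [← Finset.mul_prod_erase Finset.univ _ (Finset.mem_univ j0), hj0top]
          exact ENNReal.top_mul (Finset.prod_ne_zero_iff.2 fun j _ => hne0 j)
        rw [htop, ENNReal.mul_top (by
          simp only [ne_eq, ENNReal.ofReal_eq_zero, not_le]
          exact inv_pos.2 (Real.rpow_pos_of_pos hR0 _))] at hmono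
        exact absurd hfin (by rw [top_le_iff.1 hmono]; exact lt_irrefl ⊤)
      rw [integral_undef hnotint, abs_zero]
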